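/- Let γ be a graph with half-edges and S ⊆ Ver, and define the loop number ℓ(γ,S) := |E_γ(S)| − |S| + |π₀(γ,S)| (as an integer). Then ℓ(γ,S) ≥ 0 and ℓ(γ,S) ≤ |E(γ)| − |Ver| + |π₀(γ,Ver)|; in particular, if γ is connected then ℓ(γ,S) ≤ |E(γ)| − |Ver| + 1. -/

import Mathlib

/-- The set of edges of a graph with half-edges: unordered pairs `{f, ϑ f}`. -/
def edgeSet {F : Type*} (ϑ : F → F) : Set (Set F) :=
  {e | ∃ f, e = {f, ϑ f}}

/-- The edges both of whose flags have ε-image in `S`. -/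
def edgesIn {V F : Type*} (ε : F → V) (ϑ : F → F) (S : Set V) : Set (Set F) :=
  {e | ∃ f, e = {f, ϑ f} ∧ ε f ∈ S ∧ ε (ϑ f) ∈ S}

/-- One-step adjacency in the graph: `v` and `v'` are the two endpoints of an edge. -/
def Step {V F : Type*} (ε : F → V) (ϑ : F → F) (v v' : V) : Prop :=
  ∃ f, ε f = v ∧ ε (ϑ f) = v'

/-- The graph is connected: any two distinct vertices are joined by a chain of edges. -/
def IsConnectedGraph {V F : Type*} (ε : F → V) (ϑ : F → F) : Prop :=
  ∀ v v' : V, v ≠ v' → Relation.ReflTransGen (Step ε ϑ) v v'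

/-- One-step adjacency within the induced subgraph on the vertex subset `S`. -/
def StepIn {V F : Type*} (ε : F → V) (ϑ : F → F) (S : Set V) (v v' : V) : Prop :=
  v ∈ S ∧ v' ∈ S ∧ ∃ f, ε f = v ∧ ε (ϑ f) = v'

/-- The connected component of `v` in the induced subgraph on `S`. -/
def component {V F : Type*} (ε : F → V) (ϑ : F → F) (S : Set V) (v : V) : Set V :=
  {w | Relation.ReflTransGen (StepIn ε ϑ S) v w}

/-- `π₀(γ,S)`: the set of connected components of the induced subgraph on `S`. -/
def pi0 {V F : Type*} (ε : F → V) (ϑ : F → F) (S : Set V) : Set (Set V) :=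
  {C | ∃ v ∈ S, C = component ε ϑ S v}

/-- The crossing edges of a subset `C` of vertices: edges with exactly one flag
having ε-image in `C`. -/
def crossingEdges {V F : Type*} (ε : F → V) (ϑ : F → F) (C : Set V) : Set (Set F) :=
  {e | ∃ f, e = {f, ϑ f} ∧ ε f ∉ C ∧ ε (ϑ f) ∈ C}

/-- One-step adjacency in the graph obtained by deleting the two flags `f₀`, `ϑ f₀`. -/
def StepAvoid {V F : Type*} (ε : F → V) (ϑ : F → F) (f₀ : F) (v v' : V) : Prop :=
  ∃ g, g ≠ f₀ ∧ g ≠ ϑ f₀ ∧ ε g = v ∧ ε (ϑ g) = v'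

/-- The flag `f₀` disconnects `C` from the rest of the graph: after deleting the flags
`f₀` and `ϑ f₀`, there is no chain of edges from a vertex of `C` to a vertex outside `C`. -/
def Disconnects {V F : Type*} (ε : F → V) (ϑ : F → F) (C : Set V) (f₀ : F) : Prop :=
  ∀ v ∈ C, ∀ v' ∉ C, ¬ Relation.ReflTransGen (StepAvoid ε ϑ f₀) v v'

/-- `F°_γ(S)`: the flags `f` with `ε f ∉ S` that disconnect from the rest of the graph
the connected component of the induced subgraph on `S` containing `ε (ϑ f)`. -/
def Fcirc {V F : Type*} (ε : F → V) (ϑ : F → F) (S : Set V) : Set F :=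
  {f | ε f ∉ S ∧ ε (ϑ f) ∈ S ∧ Disconnects ε ϑ (component ε ϑ S (ε (ϑ f))) f}

/-- `F†_γ(S)`: the flags of `F°_γ(S)` whose associated component carries no marked label. -/
def Fdagger {V F L : Type*} (ε : F → V) (ϑ : F → F) (εS : L → V) (S : Set V) : Set F :=
  {f | f ∈ Fcirc ε ϑ S ∧ ∀ s : L, εS s ∉ component ε ϑ S (ε (ϑ f))}

section Aux

variable {V F : Type*} {ε : F → V} {ϑ : F → F} {S : Set V} {v u w : V}

lemma stepIn_symm (hinv : Function.Involutive ϑ) : Symmetric (StepIn ε ϑ S) := by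
  rintro a b ⟨ha, hb, f, hf1, hf2⟩
  exact ⟨hb, ha, ϑ f, hf2, by rw [hinv f]; exact hf1⟩

lemma rtg_symm (hinv : Function.Involutive ϑ)
    (h : Relation.ReflTransGen (StepIn ε ϑ S) u w) :
    Relation.ReflTransGen (StepIn ε ϑ S) w u :=
  haveI : Std.Symm (StepIn ε ϑ S) := ⟨fun _ _ hab => stepIn_symm hinv hab⟩
  Relation.ReflTransGen.stdSymm.symm _ _ h

lemma mem_of_rtg (hu : u ∈ S) (h : Relation.ReflTransGen (StepIn ε ϑ S) u w) : w ∈ S := by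
  induction h with
  | refl => exact hu
  | tail _ h2 _ => exact h2.2.1

lemma comp_eq_of_rtg (hinv : Function.Involutive ϑ)
    (h : Relation.ReflTransGen (StepIn ε ϑ S) u w) :
    component ε ϑ S u = component ε ϑ S w := by
  ext x
  constructor
  · exact fun hx => (rtg_symm hinv h).trans hx
  · exact fun hx => h.trans hx

lemma comp_subset {C : Set V} (hC : C ∈ pi0 ε ϑ S) : C ⊆ S := by
  obtain ⟨a, ha, rfl⟩ := hC
  exact fun x hx => mem_of_rtg ha hx

lemma pi0_disj (hinv : Function.Involutive ϑ) {C C' : Set V}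
    (hC : C ∈ pi0 ε ϑ S) (hC' : C' ∈ pi0 ε ϑ S) {x : V} (hx : x ∈ C) (hx' : x ∈ C') :
    C = C' := by
  obtain ⟨a, _, rfl⟩ := hC
  obtain ⟨b, _, rfl⟩ := hC'
  rw [comp_eq_of_rtg hinv hx, comp_eq_of_rtg hinv hx']

/-- The set of components of `S` directly adjacent to `v`. -/
def adjComps (ε : F → V) (ϑ : F → F) (S : Set V) (v : V) : Set (Set V) :=
  {C | C ∈ pi0 ε ϑ S ∧ ∃ f, ε f ∈ C ∧ ε (ϑ f) = v}

/-- Any vertex of `S` reachable from `v` inside `insert v S` lies in a component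
adjacent to `v`. -/
lemma reach_mem_adj (hinv : Function.Involutive ϑ) (hv : v ∉ S)
    (h : Relation.ReflTransGen (StepIn ε ϑ (insert v S)) v u) (hu : u ∈ S) :
    component ε ϑ S u ∈ adjComps ε ϑ S v := by
  have main : ∀ {u}, Relation.ReflTransGen (StepIn ε ϑ (insert v S)) v u →
      u = v ∨ (u ∈ S ∧ component ε ϑ S u ∈ adjComps ε ϑ S v) := by
    intro u h
    induction h with
    | refl => exact Or.inl rfl
    | @tail b u h1 h2 ih =>
      obtain ⟨hb, hu', f, hf1, hf2⟩ := h2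
      rcases eq_or_ne u v with rfl | hne
      · exact Or.inl rfl
      · have huS : u ∈ S := hu'.resolve_left hne
        refine Or.inr ⟨huS, ?_⟩
        rcases ih with rfl | ⟨hbS, hbN⟩
        · refine ⟨⟨u, huS, rfl⟩, ϑ f, ?_, ?_⟩
          · rw [hf2]; exact Relation.ReflTransGen.refl
          · rw [hinv f]; exact hf1
        · have : Relation.ReflTransGen (StepIn ε ϑ S) b u :=
            Relation.ReflTransGen.single ⟨hbS, huS, f, hf1, hf2⟩
          rwa [← comp_eq_of_rtg hinv this]
  rcases main h with rfl | ⟨_, h2⟩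
  · exact absurd hu hv
  · exact h2

/-- For a vertex of `S` not reachable from `v`, the component in `insert v S`
agrees with the component in `S`. -/
lemma comp_insert_eq (hinv : Function.Involutive ϑ) (hu : u ∈ S)
    (hfree : ¬ Relation.ReflTransGen (StepIn ε ϑ (insert v S)) v u) :
    component ε ϑ (insert v S) u = component ε ϑ S u := by
  ext w
  constructor
  · intro hw
    have key : ∀ {w}, Relation.ReflTransGen (StepIn ε ϑ (insert v S)) u w →
        Relation.ReflTransGen (StepIn ε ϑ S) u w := by
      intro w hw
      induction hw with
      | refl => exact Relation.ReflTransGen.refl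
      | @tail b w h1 h2 ih =>
        have hbS : b ∈ S := mem_of_rtg hu ih
        have hwv : w ≠ v := by
          rintro rfl
          exact hfree (rtg_symm hinv (h1.tail h2))
        have hwS : w ∈ S := h2.2.1.resolve_left hwv
        obtain ⟨_, _, f, hf1, hf2⟩ := h2
        exact ih.tail ⟨hbS, hwS, f, hf1, hf2⟩
    exact key hw
  · intro hw
    exact Relation.ReflTransGen.mono
      (show ∀ a b, StepIn ε ϑ S a b → StepIn ε ϑ (insert v S) a b from
      fun a b hab => ⟨Set.mem_insert_of_mem _ hab.1, Set.mem_insert_of_mem _ hab.2.1,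
        hab.2.2⟩) _ _ hw

lemma edges_lower [Fintype V] [Fintype F] (hinv : Function.Involutive ϑ) (hv : v ∉ S) :
    (edgesIn ε ϑ S).ncard + (adjComps ε ϑ S v).ncard
      ≤ (edgesIn ε ϑ (insert v S)).ncard := by
  classical
  set φ : Set V → Set F := fun C =>
    if h : ∃ f, ε f ∈ C ∧ ε (ϑ f) = v then {h.choose, ϑ h.choose} else ∅ with hφ
  have hspec : ∀ C ∈ adjComps ε ϑ S v,
      ∃ f, φ C = {f, ϑ f} ∧ ε f ∈ C ∧ ε (ϑ f) = v := by
    rintro C ⟨hC, hex⟩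
    refine ⟨hex.choose, ?_, hex.choose_spec⟩
    simp only [hφ, dif_pos hex]
  have hsub : φ '' (adjComps ε ϑ S v) ⊆ edgesIn ε ϑ (insert v S) := by
    rintro e ⟨C, hC, rfl⟩
    obtain ⟨f, hfe, hf1, hf2⟩ := hspec C hC
    exact ⟨f, hfe, Set.mem_insert_of_mem _ (comp_subset hC.1 hf1),
      by rw [hf2]; exact Set.mem_insert _ _⟩
  have hdisj : Disjoint (edgesIn ε ϑ S) (φ '' (adjComps ε ϑ S v)) := by
    rw [Set.disjoint_right]
    rintro e ⟨C, hC, rfl⟩ ⟨g, hge, hg1, hg2⟩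
    obtain ⟨f, hfe, hf1, hf2⟩ := hspec C hC
    have : g ∈ ({f, ϑ f} : Set F) := by
      rw [← hfe, hge]; exact Set.mem_insert _ _
    rcases this with rfl | hg
    · exact hv (hf2 ▸ hg2)
    · rw [Set.mem_singleton_iff] at hg
      subst hg
      rw [hinv] at hg2
      exact hv (hf2 ▸ hg1)
  have hinj : Set.InjOn φ (adjComps ε ϑ S v) := by
    intro C hC C' hC' he
    obtain ⟨f, hfe, hf1, hf2⟩ := hspec C hC
    obtain ⟨f', hfe', hf1', hf2'⟩ := hspec C' hC'
    have : f' ∈ ({f, ϑ f} : Set F) := by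
      rw [← hfe, he, hfe']; exact Set.mem_insert _ _
    rcases this with rfl | hg
    · exact pi0_disj hinv hC.1 hC'.1 hf1 hf1'
    · rw [Set.mem_singleton_iff] at hg
      subst hg
      exact absurd (comp_subset hC'.1 (hf2 ▸ hf1')) hv
  have hin : edgesIn ε ϑ S ⊆ edgesIn ε ϑ (insert v S) := by
    rintro e ⟨f, hfe, h1, h2⟩
    exact ⟨f, hfe, Set.mem_insert_of_mem _ h1, Set.mem_insert_of_mem _ h2⟩
  calc (edgesIn ε ϑ S).ncard + (adjComps ε ϑ S v).ncard
      = (edgesIn ε ϑ S).ncard + (φ '' (adjComps ε ϑ S v)).ncard := by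
        rw [Set.ncard_image_of_injOn hinj]
    _ = (edgesIn ε ϑ S ∪ φ '' (adjComps ε ϑ S v)).ncard :=
        (Set.ncard_union_eq hdisj (Set.toFinite _) (Set.toFinite _)).symm
    _ ≤ (edgesIn ε ϑ (insert v S)).ncard :=
        Set.ncard_le_ncard (Set.union_subset hin hsub) (Set.toFinite _)

lemma pi0_lower [Fintype V] [Fintype F] (hinv : Function.Involutive ϑ) (hv : v ∉ S) :
    (pi0 ε ϑ S).ncard + 1 ≤ (pi0 ε ϑ (insert v S)).ncard + (adjComps ε ϑ S v).ncard := by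
  classical
  set Sfree : Set V := {u | u ∈ S ∧ ¬ Relation.ReflTransGen (StepIn ε ϑ (insert v S)) v u}
    with hSfree
  set Sadj : Set V := {u | u ∈ S ∧ Relation.ReflTransGen (StepIn ε ϑ (insert v S)) v u}
    with hSadj
  have hsplit : S = Sfree ∪ Sadj := by
    ext x; by_cases hx : Relation.ReflTransGen (StepIn ε ϑ (insert v S)) v x <;>
      simp [hSfree, hSadj, hx]
  have hpi0 : pi0 ε ϑ S = component ε ϑ S '' S := by
    ext C; simp [pi0, Set.mem_image, eq_comm]
  have h1 : (pi0 ε ϑ S).ncard ≤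
      (component ε ϑ S '' Sfree).ncard + (component ε ϑ S '' Sadj).ncard := by
    rw [hpi0, hsplit, Set.image_union]
    exact Set.ncard_union_le _ _
  have hadj : (component ε ϑ S '' Sadj).ncard ≤ (adjComps ε ϑ S v).ncard := by
    refine Set.ncard_le_ncard ?_ (Set.toFinite _)
    rintro C ⟨u, ⟨huS, hur⟩, rfl⟩
    exact reach_mem_adj hinv hv hur huS
  have hfree_eq : component ε ϑ S '' Sfree = component ε ϑ (insert v S) '' Sfree :=
    Set.image_congr fun u hu => (comp_insert_eq hinv hu.1 hu.2).symm
  set big : Set V := component ε ϑ (insert v S) v with hbig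
  have hbig_not : big ∉ component ε ϑ (insert v S) '' Sfree := by
    rintro ⟨u, ⟨huS, hur⟩, heq⟩
    apply hur
    have : u ∈ component ε ϑ (insert v S) u := Relation.ReflTransGen.refl
    rw [heq] at this
    exact this
  have hsub2 : insert big (component ε ϑ (insert v S) '' Sfree) ⊆ pi0 ε ϑ (insert v S) := by
    rintro C hC
    rcases hC with rfl | ⟨u, hu, rfl⟩
    · exact ⟨v, Set.mem_insert _ _, rfl⟩
    · exact ⟨u, Set.mem_insert_of_mem _ hu.1, rfl⟩
  have h2 : (component ε ϑ (insert v S) '' Sfree).ncard + 1 ≤ (pi0 ε ϑ (insert v S)).ncard := by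
    have := Set.ncard_le_ncard hsub2 (Set.toFinite _)
    rwa [Set.ncard_insert_of_notMem hbig_not (Set.toFinite _)] at this
  have := hfree_eq ▸ h1
  omega

lemma ncard_insert_vertex [Fintype V] (hv : v ∉ S) :
    (insert v S).ncard = S.ncard + 1 :=
  Set.ncard_insert_of_notMem hv (Set.toFinite _)

lemma loop_key [Fintype V] [Fintype F] (hinv : Function.Involutive ϑ) (hv : v ∉ S) :
    ((edgesIn ε ϑ S).ncard : ℤ) - S.ncard + (pi0 ε ϑ S).ncard ≤
    ((edgesIn ε ϑ (insert v S)).ncard : ℤ) - (insert v S).ncard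
      + (pi0 ε ϑ (insert v S)).ncard := by
  have h1 := edges_lower (ε := ε) hinv hv
  have h2 := pi0_lower (ε := ε) hinv hv
  have h3 := ncard_insert_vertex hv
  omega

lemma loop_mono [Fintype V] [Fintype F] (hinv : Function.Involutive ϑ) :
    ∀ (n : ℕ) (A B : Set V), A ⊆ B → (B \ A).ncard = n →
    ((edgesIn ε ϑ A).ncard : ℤ) - A.ncard + (pi0 ε ϑ A).ncard ≤
    ((edgesIn ε ϑ B).ncard : ℤ) - B.ncard + (pi0 ε ϑ B).ncard := by
  intro n
  induction n with
  | zero =>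
    intro A B hAB h0
    have : B \ A = ∅ := (Set.ncard_eq_zero (Set.toFinite _)).mp h0
    have : A = B := hAB.antisymm (Set.diff_eq_empty.mp this)
    rw [this]
  | succ n ih =>
    intro A B hAB h0
    obtain ⟨x, hx⟩ := Set.nonempty_of_ncard_ne_zero (by omega : (B \ A).ncard ≠ 0)
    have hxA : x ∉ A := hx.2
    have hsub : insert x A ⊆ B := Set.insert_subset hx.1 hAB
    have hdiff : B \ insert x A = (B \ A) \ {x} := by
      ext y; simp only [Set.mem_diff, Set.mem_insert_iff, Set.mem_singleton_iff]; tauto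
    have hcard : (B \ insert x A).ncard = n := by
      rw [hdiff, Set.ncard_diff_singleton_of_mem hx, h0]
      omega
    exact (loop_key hinv hxA).trans (ih (insert x A) B hsub hcard)

lemma edgesIn_univ (ε : F → V) (ϑ : F → F) :
    edgesIn ε ϑ (Set.univ : Set V) = edgeSet ϑ := by
  ext e
  simp [edgesIn, edgeSet]

lemma pi0_empty (ε : F → V) (ϑ : F → F) : pi0 ε ϑ (∅ : Set V) = ∅ := by
  ext C; simp [pi0]

lemma edgesIn_empty (ε : F → V) (ϑ : F → F) : edgesIn ε ϑ (∅ : Set V) = ∅ := by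
  ext e; simp [edgesIn]

lemma pi0_univ_le_one [Fintype V] (hinv : Function.Involutive ϑ)
    (hconn : IsConnectedGraph ε ϑ) :
    (pi0 ε ϑ (Set.univ : Set V)).ncard ≤ 1 := by
  have hsub : (pi0 ε ϑ (Set.univ : Set V)).Subsingleton := by
    rintro C ⟨a, _, rfl⟩ C' ⟨b, _, rfl⟩
    rcases eq_or_ne a b with rfl | hab
    · rfl
    · have := hconn a b hab
      have hR : Relation.ReflTransGen (StepIn ε ϑ (Set.univ : Set V)) a b :=
        Relation.ReflTransGen.mono
          (show ∀ x y, Step ε ϑ x y → StepIn ε ϑ (Set.univ : Set V) x y from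
          fun x y ⟨f, h1, h2⟩ => ⟨Set.mem_univ x, Set.mem_univ y, f, h1, h2⟩) _ _ this
      exact comp_eq_of_rtg hinv hR
  rcases hsub.eq_empty_or_singleton with h | ⟨a, h⟩ <;> simp [h]

end Aux

/-- For a graph with half-edges and a vertex subset `S`, the loop number
`ℓ(γ,S) = |E_γ(S)| − |S| + |π₀(γ,S)|` satisfies `0 ≤ ℓ(γ,S)` and
`ℓ(γ,S) ≤ |E(γ)| − |Ver| + |π₀(γ,Ver)|`; in particular, if the graph is connected then
`ℓ(γ,S) ≤ |E(γ)| − |Ver| + 1`. -/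
theorem stmt7 {V F : Type*} [Fintype V] [Fintype F]
    (ε : F → V) (ϑ : F → F) (hinv : Function.Involutive ϑ) (hfpf : ∀ f, ϑ f ≠ f)
    (S : Set V) :
    0 ≤ ((edgesIn ε ϑ S).ncard : ℤ) - S.ncard + (pi0 ε ϑ S).ncard ∧
    ((edgesIn ε ϑ S).ncard : ℤ) - S.ncard + (pi0 ε ϑ S).ncard ≤
      ((edgeSet ϑ).ncard : ℤ) - (Fintype.card V : ℤ) + (pi0 ε ϑ (Set.univ : Set V)).ncard ∧
    (IsConnectedGraph ε ϑ →
      ((edgesIn ε ϑ S).ncard : ℤ) - S.ncard + (pi0 ε ϑ S).ncard ≤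
        ((edgeSet ϑ).ncard : ℤ) - (Fintype.card V : ℤ) + 1) := by
  have hempty := loop_mono (ε := ε) hinv (S \ ∅).ncard ∅ S (Set.empty_subset S) rfl
  rw [edgesIn_empty, pi0_empty] at hempty
  simp only [Set.ncard_empty, Nat.cast_zero, sub_zero, add_zero, zero_sub, neg_zero] at hempty
  have huniv := loop_mono (ε := ε) hinv ((Set.univ : Set V) \ S).ncard S Set.univ
    (Set.subset_univ S) rfl
  rw [edgesIn_univ, Set.ncard_univ, Nat.card_eq_fintype_card] at huniv
  refine ⟨hempty, huniv, fun hconn => ?_⟩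
  have := pi0_univ_le_one hinv hconn
  omega
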